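/- arXiv:2006.03188 — 4 statements merged into one kernel-verified Lean document; each statement's English description precedes it below -/
import Mathlib

section
/- If G is a connected graph of treedepth k and G is a subgraph of the closure of a rooted tree T of height k, then the root of T is a vertex of G. -/
/-- A rooted tree on vertex set `V`, given by a parent function together with a
depth function certifying acyclicity.  The root is the unique vertex of depth `0`. -/
structure RTree (V : Type*) where
  parent : V → V
  root : V
  depth : V → ℕ
  depth_root : depth root = 0
  depth_parent : ∀ v, v ≠ root → depth (parent v) + 1 = depth v
  parent_root : parent root = root

namespace RTree

variable {V : Type*} (T : RTree V)

/-- `u` is a strict ancestor of `v` in `T`. -/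
def IsStrictAncestor (u v : V) : Prop :=
  u ≠ v ∧ ∃ n : ℕ, T.parent^[n] v = u

/-- The closure of a rooted tree: `u ~ v` iff one is a strict ancestor of the other. -/
def closure : SimpleGraph V where
  Adj u v := T.IsStrictAncestor u v ∨ T.IsStrictAncestor v u
  symm := by constructor; intro u v h; tauto
  loopless := by constructor; rintro v (⟨h, -⟩ | ⟨h, -⟩) <;> exact h rfl

/-- `T` has height at most `k`: every root-to-leaf path has at most `k` vertices. -/
def HeightLE (k : ℕ) : Prop := ∀ v, T.depth v < k

/-- `v` is a leaf of `T` (it has no children). -/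
def IsLeaf (v : V) : Prop := ∀ u, T.parent u = v → u = v

end RTree

namespace RTree

variable {V : Type*} (T : RTree V)

lemma eq_root_of_depth_eq_zero' {v : V} (h : T.depth v = 0) : v = T.root := by
  by_contra hv
  have := T.depth_parent v hv
  omega

lemma depth_iterate' {v : V} {i : ℕ} (h : i ≤ T.depth v) :
    T.depth (T.parent^[i] v) = T.depth v - i := by
  induction i with
  | zero => simp
  | succ n ih =>
    rw [Function.iterate_succ_apply']
    have h1 : T.depth (T.parent^[n] v) = T.depth v - n := ih (by omega)
    have hne : T.parent^[n] v ≠ T.root := by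
      intro he
      rw [he, T.depth_root] at h1; omega
    have := T.depth_parent _ hne
    omega

lemma iterate_parent_root' (n : ℕ) : T.parent^[n] T.root = T.root := by
  induction n with
  | zero => rfl
  | succ n ih => rw [Function.iterate_succ_apply', ih, T.parent_root]

lemma iterate_depth_eq_root' (v : V) : T.parent^[T.depth v] v = T.root := by
  suffices h : ∀ n (v : V), T.depth v = n → T.parent^[n] v = T.root from h _ v rfl
  intro n
  induction n with
  | zero => intro v hv; exact T.eq_root_of_depth_eq_zero' hv
  | succ n ih =>
    intro v hv
    have hne : v ≠ T.root := by intro h; rw [h, T.depth_root] at hv; omega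
    rw [Function.iterate_succ_apply]
    exact ih _ (by have := T.depth_parent v hne; omega)

lemma lt_depth_of_iterate_ne_root' {v u : V} {n : ℕ} (h : T.parent^[n] v = u)
    (hu : u ≠ T.root) : n < T.depth v := by
  by_contra hc
  push_neg at hc
  have : T.parent^[n] v = T.root := by
    have hn : n = (n - T.depth v) + T.depth v := by omega
    rw [hn, Function.iterate_add_apply, T.iterate_depth_eq_root',
      T.iterate_parent_root']
  exact hu (h ▸ this)

end RTree

/-- A graph `G` has treedepth at most `k` if it embeds into the closure of a rooted
tree of height at most `k` (whose vertex set may be larger than that of `G`). -/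
def TreedepthLE {W : Type} (G : SimpleGraph W) (k : ℕ) : Prop :=
  ∃ (V : Type) (T : RTree V) (f : W ↪ V),
    T.HeightLE k ∧ ∀ a b, G.Adj a b → T.closure.Adj (f a) (f b)

/-- If `G` is a connected graph whose treedepth is exactly `k`, and `G`
is a subgraph of the closure of a rooted tree `T` of height exactly `k` (via an embedding
`f` of the vertices of `G` into the vertices of `T`), then the root of `T` is a vertex
of `G`, i.e. lies in the range of `f`. -/
theorem rootedTree_root_mem_of_connected_treedepth
    {W V : Type} (G : SimpleGraph W) (k : ℕ)
    (hconn : G.Connected)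
    (htd : TreedepthLE G k ∧ ∀ j < k, ¬ TreedepthLE G j)
    (T : RTree V)
    (hheight : T.HeightLE k ∧ ∃ v, T.depth v + 1 = k)
    (f : W ↪ V)
    (hsub : ∀ a b, G.Adj a b → T.closure.Adj (f a) (f b)) :
    ∃ w : W, f w = T.root := by
  classical
  by_contra hno
  push_neg at hno
  obtain ⟨hle, v0, hv0⟩ := hheight
  obtain ⟨w0⟩ := hconn.nonempty
  -- every image has positive depth
  have hdep : ∀ w : W, 1 ≤ T.depth (f w) := by
    intro w
    rcases Nat.eq_zero_or_pos (T.depth (f w)) with h | h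
    · exact absurd (T.eq_root_of_depth_eq_zero' h) (hno w)
    · exact h
  have hk2 : 2 ≤ k := by
    have := hle (f w0)
    have := hdep w0
    omega
  -- the depth-1 ancestor of `f w0`
  set r : V := T.parent^[T.depth (f w0) - 1] (f w0) with hr
  have hdr : T.depth r = 1 := by
    rw [hr, T.depth_iterate' (by omega)]
    have := hdep w0; omega
  -- membership in the subtree rooted at `r`
  set S : V → Prop := fun v => 1 ≤ T.depth v ∧ T.parent^[T.depth v - 1] v = r with hS
  have hSr : S r := ⟨by omega, by rw [hdr]; simp⟩
  have hSw0 : S (f w0) := ⟨hdep w0, rfl⟩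
  -- S transfers along strict-ancestor relations among non-root vertices
  have key : ∀ u v : V, u ≠ T.root → v ≠ T.root → T.IsStrictAncestor u v →
      (S u → S v) ∧ (S v → S u) := by
    intro u v hu hv ⟨hne, n, hn⟩
    have hnlt : n < T.depth v := T.lt_depth_of_iterate_ne_root' hn hu
    have hdu : T.depth u = T.depth v - n := by
      rw [← hn, T.depth_iterate' (by omega)]
    have hdu1 : 1 ≤ T.depth u := by
      rcases Nat.eq_zero_or_pos (T.depth u) with h | h
      · exact absurd (T.eq_root_of_depth_eq_zero' h) hu
      · exact h
    have hdv1 : 1 ≤ T.depth v := by omega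
    constructor
    · rintro ⟨-, h2⟩
      refine ⟨hdv1, ?_⟩
      have he : T.depth v - 1 = (T.depth u - 1) + n := by omega
      rw [he, Function.iterate_add_apply, hn]
      exact h2
    · rintro ⟨-, h2⟩
      refine ⟨hdu1, ?_⟩
      have h3 : T.parent^[T.depth u - 1 + n] v = T.parent^[T.depth u - 1] u := by
        rw [Function.iterate_add_apply, hn]
      rw [← h3, (show T.depth u - 1 + n = T.depth v - 1 by omega)]
      exact h2
  -- all images of G's vertices lie in the subtree at r
  have step : ∀ a b : W, G.Adj a b → S (f a) → S (f b) := by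
    intro a b hab hSa
    rcases hsub a b hab with h | h
    · exact (key (f a) (f b) (hno a) (hno b) h).1 hSa
    · exact (key (f b) (f a) (hno b) (hno a) h).2 hSa
  have hall : ∀ w : W, S (f w) := by
    have walkstep : ∀ {x y : W} (_ : G.Walk x y), S (f x) → S (f y) := by
      intro x y p
      induction p with
      | nil => exact id
      | cons h q ih => intro hx; exact ih (step _ _ h hx)
    intro w
    obtain ⟨p⟩ := hconn.preconnected w0 w
    exact walkstep p hSw0
  -- the parent map preserves S away from r
  have hSparent : ∀ v : V, S v → v ≠ r → S (T.parent v) := by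
    intro v hv hvr
    obtain ⟨h1, h2⟩ := hv
    have hdv : 2 ≤ T.depth v := by
      by_contra h
      have hd1 : T.depth v = 1 := by omega
      rw [hd1] at h2
      exact hvr h2
    have hvroot : v ≠ T.root := by
      intro h; rw [h, T.depth_root] at hdv; omega
    have hdp : T.depth (T.parent v) = T.depth v - 1 := by
      have := T.depth_parent v hvroot; omega
    refine ⟨by omega, ?_⟩
    rw [hdp]
    have he : T.depth v - 1 = (T.depth v - 2) + 1 := by omega
    rw [he, Function.iterate_succ_apply] at h2
    have he2 : T.depth v - 1 - 1 = T.depth v - 2 := by omega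
    rw [he2]
    exact h2
  -- the restricted tree of height k - 1
  let T' : RTree {v : V // S v} :=
    { parent := fun v => if h : v.1 = r then ⟨r, hSr⟩
        else ⟨T.parent v.1, hSparent v.1 v.2 h⟩
      root := ⟨r, hSr⟩
      depth := fun v => T.depth v.1 - 1
      depth_root := by simp [hdr]
      depth_parent := by
        rintro ⟨v, hv⟩ hvne
        have hvr : v ≠ r := fun h => hvne (Subtype.ext h)
        simp only [dif_neg hvr]
        obtain ⟨h1, h2⟩ := hv
        have hdv : 2 ≤ T.depth v := by
          by_contra h
          have hd1 : T.depth v = 1 := by omega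
          rw [hd1] at h2
          exact hvr h2
        have hvroot : v ≠ T.root := by
          intro h; rw [h, T.depth_root] at hdv; omega
        have hdp := T.depth_parent v hvroot
        omega
      parent_root := by simp }
  -- iterates in T' agree with iterates in T
  have hiter : ∀ (v : V) (hv : S v) (i : ℕ), i ≤ T.depth v - 1 →
      (T'.parent^[i] ⟨v, hv⟩).1 = T.parent^[i] v := by
    intro v hv i
    induction i with
    | zero => intro _; rfl
    | succ n ih =>
      intro hn
      rw [Function.iterate_succ_apply', Function.iterate_succ_apply']
      have ihv := ih (by omega)
      have hdn : T.depth ((T'.parent^[n] ⟨v, hv⟩) : {v // S v}).1 = T.depth v - n := by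
        rw [ihv, T.depth_iterate' (by omega)]
      have hner : ((T'.parent^[n] ⟨v, hv⟩) : {v // S v}).1 ≠ r := by
        intro h
        rw [h, hdr] at hdn
        omega
      show (T'.parent (T'.parent^[n] ⟨v, hv⟩)).1 = T.parent (T.parent^[n] v)
      rw [← ihv]
      simp only [T', dif_neg hner]
  -- strict ancestors transfer to T'
  have hancT' : ∀ (u v : V) (hu : S u) (hv : S v), T.IsStrictAncestor u v →
      T'.IsStrictAncestor ⟨u, hu⟩ ⟨v, hv⟩ := by
    intro u v hu hv ⟨hne, n, hn⟩
    have huroot : u ≠ T.root := by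
      have h1 := hu.1
      intro h
      rw [h, T.depth_root] at h1
      omega
    have hnlt : n < T.depth v := T.lt_depth_of_iterate_ne_root' hn huroot
    have hdu : T.depth u = T.depth v - n := by
      rw [← hn, T.depth_iterate' (by omega)]
    have hnle : n ≤ T.depth v - 1 := by
      have := hu.1; omega
    refine ⟨fun h => hne (congrArg Subtype.val h), n, ?_⟩
    exact Subtype.ext (by rw [hiter v hv n hnle, hn])
  -- contradiction with minimality of the treedepth
  have hTD : TreedepthLE G (k - 1) := by
    refine ⟨{v : V // S v}, T', ⟨fun w => ⟨f w, hall w⟩,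
      fun a b h => f.injective (congrArg Subtype.val h)⟩, ?_, ?_⟩
    · intro v
      have := hle v.1
      have := v.2.1
      show T.depth v.1 - 1 < k - 1
      omega
    · intro a b hab
      rcases hsub a b hab with h | h
      · exact Or.inl (hancT' _ _ (hall a) (hall b) h)
      · exact Or.inr (hancT' _ _ (hall b) (hall a) h)
  exact htd.2 (k - 1) (by omega) hTD
end

section
/- Let k ≥ 3 and let G be the closure of the rooted tree consisting of a path p_1,...,p_{k-1} with 2k-4 leaves attached to p_{k-1}. Then the clique number of G equals k and the chromatic number of G equals k. -/
/-- The closure of the rooted tree consisting of a path `p₁, …, p_{k-1}` (rooted at `p₁`)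
together with `2k - 4` leaves attached to `p_{k-1}`.  Path vertices are `Sum.inl i`,
leaves are `Sum.inr j`; the path vertices form a clique, each leaf is adjacent to every
path vertex, and no two leaves are adjacent. -/
def pathLeafGraph (k : ℕ) : SimpleGraph (Fin (k - 1) ⊕ Fin (2 * k - 4)) where
  Adj u v := u ≠ v ∧ (u.isLeft ∨ v.isLeft)
  symm := ⟨by rintro u v ⟨h1, h2⟩; exact ⟨h1.symm, h2.symm⟩⟩
  loopless := ⟨fun v h => h.1 rfl⟩

/-- For `k ≥ 3`, the closure of the rooted tree consisting of a path
`p₁, …, p_{k-1}` with `2k - 4` leaves attached to `p_{k-1}` has clique number exactly `k`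
and chromatic number exactly `k`. -/
theorem pathLeafGraph_cliqueNum_chromaticNumber (k : ℕ) (hk : 3 ≤ k) :
    (pathLeafGraph k).cliqueNum = k ∧ (pathLeafGraph k).chromaticNumber = k := by
  classical
  have hk1 : 0 < k - 1 := by omega
  have hk2 : 0 < 2 * k - 4 := by omega
  set S : Finset (Fin (k - 1) ⊕ Fin (2 * k - 4)) :=
    (Finset.univ.image Sum.inl) ∪ {Sum.inr ⟨0, hk2⟩} with hS
  have hSclique : (pathLeafGraph k).IsClique S := by
    rintro (i | i) hu (j | j) hv huv
    · exact ⟨huv, Or.inl rfl⟩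
    · exact ⟨huv, Or.inl rfl⟩
    · exact ⟨huv, Or.inr rfl⟩
    · exfalso
      simp [hS] at hu hv
      exact huv (by rw [hu, hv])
  have hScard : S.card = k := by
    rw [hS, Finset.card_union_of_disjoint (by simp),
      Finset.card_image_of_injective _ Sum.inl_injective]
    simp; omega
  have hub : ∀ s : Finset (Fin (k - 1) ⊕ Fin (2 * k - 4)),
      (pathLeafGraph k).IsClique s → s.card ≤ k := by
    intro s hs
    have h1 : (s.filter (fun u => u.isLeft)).card ≤ k - 1 := by
      have h : (s.filter (fun u => u.isLeft)).card ≤ Fintype.card (Fin (k-1)) := by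
        rw [← Finset.card_univ]
        apply Finset.card_le_card_of_injOn (fun u => u.getLeft?.getD ⟨0, hk1⟩)
          (fun a _ => Finset.mem_univ _)
        intro a ha b hb hab
        simp only [Finset.mem_coe, Finset.mem_filter] at ha hb
        obtain ⟨x, rfl⟩ := Sum.isLeft_iff.mp ha.2
        obtain ⟨y, rfl⟩ := Sum.isLeft_iff.mp hb.2
        simpa using hab
      simpa using h
    have h2 : (s.filter (fun u => ¬ u.isLeft)).card ≤ 1 := by
      rw [Finset.card_le_one]
      intro a ha b hb
      simp only [Finset.mem_filter] at ha hb
      by_contra hab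
      rcases (hs ha.1 hb.1 hab).2 with h | h
      · exact ha.2 h
      · exact hb.2 h
    calc s.card = (s.filter (fun u => u.isLeft)).card
          + (s.filter (fun u => ¬ u.isLeft)).card :=
          (Finset.card_filter_add_card_filter_not _).symm
      _ ≤ (k - 1) + 1 := add_le_add h1 h2
      _ ≤ k := by omega
  have hclique : (pathLeafGraph k).cliqueNum = k := by
    refine le_antisymm ?_ ?_
    · exact csSup_le ⟨0, ⟨∅, by simp [SimpleGraph.isNClique_empty]⟩⟩
        (by rintro n ⟨s, hc, rfl⟩; exact hub s hc)
    · have h := SimpleGraph.IsClique.card_le_cliqueNum (tc := hSclique)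
      rwa [hScard] at h
  refine ⟨hclique, le_antisymm ?_ ?_⟩
  · have hcol : (pathLeafGraph k).Colorable k := by
      refine ⟨⟨Sum.elim (fun i => Fin.castLE (by omega) i) (fun _ => ⟨k-1, by omega⟩), ?_⟩⟩
      rintro (i | i) (j | j) ⟨hne, hL⟩
      · simp only [Sum.elim_inl]
        exact fun h => hne (congrArg Sum.inl (Fin.castLE_injective _ h))
      · simp only [Sum.elim_inl, Sum.elim_inr]
        intro h
        have hi := i.isLt
        have : (i : ℕ) = k - 1 := congrArg Fin.val h
        omega
      · simp only [Sum.elim_inl, Sum.elim_inr]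
        intro h
        have hj := j.isLt
        have : k - 1 = (j : ℕ) := congrArg Fin.val h
        omega
      · simp at hL
    exact hcol.chromaticNumber_le
  · have h := hSclique.card_le_chromaticNumber
    rwa [hScard] at h
end

section
/- The graph G (root r joined to a path w_0,...,w_48, with pendant-triangle vertices v_1,...,v_48 where v_i ~ w_{i-1}, w_i) is outerplanar and is not bipartite. -/
/-- Vertices of the graph `G`: the root `r` (left), the path vertices `w₀, …, w₄₈`
(middle, indexed by `Fin 49`), and the vertices `v₁, …, v₄₈` (right, indexed by `Fin 48`,
where index `j` stands for `v_{j+1}`). -/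
abbrev V98 : Type := Unit ⊕ Fin 49 ⊕ Fin 48

/-- One-directional edge relation for `G`:  `r ~ wᵢ` for all `i`;  `wᵢ ~ w_{i+1}`;  and
`v_{j+1} ~ w_j`, `v_{j+1} ~ w_{j+1}`. -/
def Rel98 : V98 → V98 → Prop
  | Sum.inl _, Sum.inr (Sum.inl _) => True
  | Sum.inr (Sum.inl i), Sum.inr (Sum.inl j) => (j : ℕ) = (i : ℕ) + 1
  | Sum.inr (Sum.inr j), Sum.inr (Sum.inl i) => (i : ℕ) = (j : ℕ) ∨ (i : ℕ) = (j : ℕ) + 1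
  | _, _ => False

/-- The outerplanar 2-tree `G` on `98` vertices from the paper:  the root `r` is adjacent
to every `wᵢ`, the `wᵢ` form a path, and each `v_{j+1}` is adjacent to `w_j` and `w_{j+1}`. -/
def G98 : SimpleGraph V98 where
  Adj u v := Rel98 u v ∨ Rel98 v u
  symm := ⟨by intro u v h; exact h.symm⟩
  loopless := ⟨by
    rintro (u | i | j) h <;> rcases h with h | h <;> simp only [Rel98] at h <;> omega⟩

/-- `H` is a minor of `G`: there are pairwise disjoint connected branch sets in `G`,
one for each vertex of `H`, such that every edge of `H` is realised by an edge of `G`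
between the corresponding branch sets. -/
def HasMinor {V W : Type*} (G : SimpleGraph V) (H : SimpleGraph W) : Prop :=
  ∃ f : W → Set V,
    (∀ w, (G.induce (f w)).Connected) ∧
    (Pairwise fun a b => Disjoint (f a) (f b)) ∧
    ∀ a b, H.Adj a b → ∃ u ∈ f a, ∃ v ∈ f b, G.Adj u v

/-- A graph is outerplanar iff it has no `K₄` minor and no `K_{2,3}` minor. -/
def IsOuterplanar {V : Type*} (G : SimpleGraph V) : Prop :=
  ¬ HasMinor G (SimpleGraph.completeGraph (Fin 4)) ∧
    ¬ HasMinor G (completeBipartiteGraph (Fin 2) (Fin 3))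

def q : V98 → ℕ
  | Sum.inl _ => 100
  | Sum.inr (Sum.inl i) => 2 * i
  | Sum.inr (Sum.inr k) => 2 * k + 1

lemma q_inj {y z : V98} (h : q y = q z) : y = z := by
  rcases y with y | y | y <;> rcases z with z | z | z <;>
    simp only [q] at h <;>
    first
      | rfl
      | exact congrArg _ (congrArg _ (Fin.ext (by omega)))
      | (exfalso; (try have := y.isLt); (try have := z.isLt); omega)

lemma adj_q {y z : V98} (hy : y ≠ Sum.inl ()) (hz : z ≠ Sum.inl ())
    (h : G98.Adj y z) :
    (q z = q y + 1 ∨ q y = q z + 1) ∨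
      ((q z = q y + 2 ∧ q y % 2 = 0) ∨ (q y = q z + 2 ∧ q z % 2 = 0)) := by
  have h' : Rel98 y z ∨ Rel98 z y := h
  rcases y with y | y | y <;> rcases z with z | z | z <;>
    simp only [Rel98, or_false, false_or] at h' <;>
    first
      | (exact absurd rfl hy)
      | (exact absurd rfl hz)
      | (simp only [q]; omega)

lemma adj_to_r {y : V98} (h : G98.Adj y (Sum.inl ())) : q y % 2 = 0 := by
  have h' : Rel98 y (Sum.inl ()) ∨ Rel98 (Sum.inl ()) y := h
  rcases y with y | y | y <;> simp only [Rel98, or_false, false_or] at h' <;>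
    first | (exact h'.elim) | (simp [q])

def Free (S : Set V98) : Prop := Sum.inl () ∉ S

def AdjSets (S T : Set V98) : Prop := ∃ u ∈ S, ∃ x ∈ T, G98.Adj u x

lemma AdjSets.symm {S T : Set V98} (h : AdjSets S T) : AdjSets T S := by
  obtain ⟨u, hu, x, hx, h⟩ := h
  exact ⟨x, hx, u, hu, h.symm⟩

def Before (S T : Set V98) : Prop := ∀ u ∈ S, ∀ x ∈ T, q u < q x

lemma ne_r_of_free {S : Set V98} (hf : Free S) {u : V98} (hu : u ∈ S) :
    u ≠ Sum.inl () := fun h => hf (h ▸ hu)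

/-- crossing step: an edge between non-root vertices with `q y ≤ 2j < q z` forces `q y = 2j`. -/
lemma cross_step {y z : V98} (hy : y ≠ Sum.inl ()) (hz : z ≠ Sum.inl ())
    (h : G98.Adj y z) {j : ℕ} (h1 : q y ≤ 2 * j) (h2 : 2 * j < q z) : q y = 2 * j := by
  rcases adj_q hy hz h with (h' | h') | (h' | h') <;> omega

lemma cut_walk {S : Set V98} (hf : Free S) {j : ℕ} {a b : ↥S}
    (p : (G98.induce S).Walk a b) (h1 : q ↑a ≤ 2 * j) (h2 : 2 * j ≤ q ↑b) :
    ∃ y ∈ S, q y = 2 * j := by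
  induction p with
  | @nil c => exact ⟨_, c.2, le_antisymm h1 h2⟩
  | @cons u v w h p ih =>
    by_cases hc : q ↑v ≤ 2 * j
    · exact ih hc h2
    · push_neg at hc
      have hadj : G98.Adj ↑u ↑v := h
      exact ⟨_, u.2, cross_step (ne_r_of_free hf u.2) (ne_r_of_free hf v.2) hadj h1 hc⟩

lemma cut {S : Set V98} (hconn : (G98.induce S).Connected) (hf : Free S)
    {u x : V98} (hu : u ∈ S) (hx : x ∈ S) {j : ℕ}
    (h1 : min (q u) (q x) ≤ 2 * j) (h2 : 2 * j ≤ max (q u) (q x)) :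
    ∃ y ∈ S, q y = 2 * j := by
  rcases le_total (q u) (q x) with hle | hle
  · rw [min_eq_left hle] at h1
    rw [max_eq_right hle] at h2
    obtain ⟨p⟩ := hconn.preconnected ⟨u, hu⟩ ⟨x, hx⟩
    exact cut_walk hf p h1 h2
  · rw [min_eq_right hle] at h1
    rw [max_eq_left hle] at h2
    obtain ⟨p⟩ := hconn.preconnected ⟨x, hx⟩ ⟨u, hu⟩
    exact cut_walk hf p h1 h2

lemma conn_nonempty {S : Set V98} (hconn : (G98.induce S).Connected) : S.Nonempty :=
  Set.nonempty_coe_sort.mp hconn.nonempty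

/-- If every element of `S` sits at odd position `2k+1`, then any edge out of `S`
lands on the vertices at positions `2k` or `2k+2`. -/
lemma H3 {S U : Set V98} {k : ℕ} (hfS : Free S)
    (hSv : ∀ z ∈ S, q z = 2 * k + 1)
    {y1 y2 : V98} (hqy1 : q y1 = 2 * k) (hqy2 : q y2 = 2 * k + 2)
    (hadj : AdjSets S U)
    (hb1 : y1 ∉ U) (hb2 : y2 ∉ U) : False := by
  obtain ⟨a, haS, b, hbU, hab⟩ := hadj
  have hqa : q a = 2 * k + 1 := hSv a haS
  have hbr : b ≠ Sum.inl () := by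
    rintro rfl
    have := adj_to_r hab
    omega
  have : q b = 2 * k ∨ q b = 2 * k + 2 := by
    rcases adj_q (ne_r_of_free hfS haS) hbr hab with (h' | h') | (h' | h') <;> omega
  rcases this with h' | h'
  · exact hb1 (q_inj (h'.trans hqy1.symm) ▸ hbU)
  · exact hb2 (q_inj (h'.trans hqy2.symm) ▸ hbU)

/-- No branch set can sit strictly between two adjacent branch sets,
if it must also reach a fourth set. -/
lemma H2 {S T Z U : Set V98} (hfS : Free S) (hfT : Free T) (hfZ : Free Z)
    (hZne : Z.Nonempty) (hST : AdjSets S T) (h1 : Before S Z) (h2 : Before Z T)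
    (hZU : AdjSets Z U)
    (hUS : ∀ b ∈ U, b ∉ S) (hUT : ∀ b ∈ U, b ∉ T) : False := by
  obtain ⟨u, huS, x, hxT, hux⟩ := hST
  obtain ⟨z0, hz0⟩ := hZne
  have hu1 : q u < q z0 := h1 u huS z0 hz0
  have hu2 : q z0 < q x := h2 z0 hz0 x hxT
  have hqx : q x = q u + 2 ∧ q u % 2 = 0 := by
    rcases adj_q (ne_r_of_free hfS huS) (ne_r_of_free hfT hxT) hux
      with (h' | h') | (h' | h') <;> omega
  obtain ⟨k, hk⟩ : ∃ k, q u = 2 * k := ⟨q u / 2, by omega⟩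
  have hall : ∀ z ∈ Z, q z = 2 * k + 1 := by
    intro z hz
    have := h1 u huS z hz
    have := h2 z hz x hxT
    omega
  exact H3 hfZ hall (y1 := u) (y2 := x) (by omega) (by omega) hZU
    (fun h => hUS u h huS) (fun h => hUT x h hxT)

/-- Two disjoint connected branch sets avoiding the root are either linearly ordered by
position, or one of them is squeezed at an odd position with both flanking path vertices
in the other. -/
lemma ORD {S T : Set V98} (hcS : (G98.induce S).Connected) (hcT : (G98.induce T).Connected)
    (hfS : Free S) (hfT : Free T) (hd : ∀ v, v ∈ S → v ∈ T → False) :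
    Before S T ∨ Before T S ∨
      (∃ k, (∀ z ∈ S, q z = 2 * k + 1) ∧
        (∃ y1 ∈ T, q y1 = 2 * k) ∧ (∃ y2 ∈ T, q y2 = 2 * k + 2)) ∨
      (∃ k, (∀ z ∈ T, q z = 2 * k + 1) ∧
        (∃ y1 ∈ S, q y1 = 2 * k) ∧ (∃ y2 ∈ S, q y2 = 2 * k + 2)) := by
  by_cases h1 : Before S T
  · exact Or.inl h1
  by_cases h2 : Before T S
  · exact Or.inr (Or.inl h2)
  right; right
  simp only [Before, not_forall] at h1 h2
  obtain ⟨u, huS, x, hxT, hux⟩ := h1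
  obtain ⟨y, hyT, z, hzS, hzy⟩ := h2
  push_neg at hux hzy
  -- strictness
  have hux' : q x < q u := by
    rcases lt_or_eq_of_le hux with h | h
    · exact h
    · exact (hd u huS (q_inj h ▸ hxT)).elim
  have hzy' : q z < q y := by
    rcases lt_or_eq_of_le hzy with h | h
    · exact h
    · exact (hd z hzS (q_inj h.symm ▸ hyT)).elim
  -- spans
  set mS := min (q z) (q u) with hmS
  set MS := max (q z) (q u) with hMS
  set mT := min (q x) (q y) with hmT
  set MT := max (q x) (q y) with hMT
  have cutS : ∀ j : ℕ, mS ≤ 2 * j → 2 * j ≤ MS → ∃ y ∈ S, q y = 2 * j := by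
    intro j hj1 hj2
    exact cut hcS hfS hzS huS hj1 hj2
  have cutT : ∀ j : ℕ, mT ≤ 2 * j → 2 * j ≤ MT → ∃ y' ∈ T, q y' = 2 * j := by
    intro j hj1 hj2
    exact cut hcT hfT hxT hyT hj1 hj2
  have hno : ∀ j : ℕ, max mS mT ≤ 2 * j → 2 * j ≤ min MS MT → False := by
    intro j hj1 hj2
    obtain ⟨a, haS, hqa⟩ := cutS j (by omega) (by omega)
    obtain ⟨b, hbT, hqb⟩ := cutT j (by omega) (by omega)
    exact hd a haS (q_inj (hqa.trans hqb.symm) ▸ hbT)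
  -- the intersection point
  have hab : max mS mT ≤ min MS MT := by omega
  have heq : max mS mT = min MS MT ∧ (max mS mT) % 2 = 1 := by
    rcases Nat.lt_or_ge (max mS mT) (min MS MT) with h | h
    · exfalso
      rcases Nat.even_or_odd (max mS mT) with ⟨j, hj⟩ | ⟨j, hj⟩
      · exact hno j (by omega) (by omega)
      · exact hno (j + 1) (by omega) (by omega)
    · have he : max mS mT = min MS MT := by omega
      refine ⟨he, ?_⟩
      rcases Nat.even_or_odd (max mS mT) with ⟨j, hj⟩ | ⟨j, hj⟩
      · exact (hno j (by omega) (by omega)).elim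
      · omega
  obtain ⟨k, hk⟩ : ∃ k, max mS mT = 2 * k + 1 := ⟨max mS mT / 2, by omega⟩
  have hk' : min MS MT = 2 * k + 1 := heq.1 ▸ hk
  have hbS : mS ≤ 2 * k + 1 := hk ▸ le_max_left mS mT
  have hbT : mT ≤ 2 * k + 1 := hk ▸ le_max_right mS mT
  have hBS : 2 * k + 1 ≤ MS := hk' ▸ min_le_left MS MT
  have hBT : 2 * k + 1 ≤ MT := hk' ▸ min_le_right MS MT
  have hattmS : ∃ s ∈ S, q s = mS := by
    rcases le_total (q z) (q u) with h | h
    · exact ⟨z, hzS, (min_eq_left h).symm⟩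
    · exact ⟨u, huS, (min_eq_right h).symm⟩
  have hattMS : ∃ s ∈ S, q s = MS := by
    rcases le_total (q z) (q u) with h | h
    · exact ⟨u, huS, (max_eq_right h).symm⟩
    · exact ⟨z, hzS, (max_eq_left h).symm⟩
  have hattmT : ∃ t ∈ T, q t = mT := by
    rcases le_total (q x) (q y) with h | h
    · exact ⟨x, hxT, (min_eq_left h).symm⟩
    · exact ⟨y, hyT, (min_eq_right h).symm⟩
  have hattMT : ∃ t ∈ T, q t = MT := by
    rcases le_total (q x) (q y) with h | h
    · exact ⟨y, hyT, (max_eq_right h).symm⟩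
    · exact ⟨x, hxT, (max_eq_left h).symm⟩
  have hcontra : (∃ s ∈ S, q s = 2 * k + 1) → (∃ t ∈ T, q t = 2 * k + 1) → False := by
    rintro ⟨s, hs, hqs⟩ ⟨t, ht, hqt⟩
    exact hd s hs (q_inj (hqs.trans hqt.symm) ▸ ht)
  have hgetS : mS = 2 * k + 1 ∨ MS = 2 * k + 1 → ∃ s ∈ S, q s = 2 * k + 1 := by
    rintro (h | h)
    · exact h ▸ hattmS
    · exact h ▸ hattMS
  have hgetT : mT = 2 * k + 1 ∨ MT = 2 * k + 1 → ∃ t ∈ T, q t = 2 * k + 1 := by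
    rintro (h | h)
    · exact h ▸ hattmT
    · exact h ▸ hattMT
  have hS21 : mS = 2 * k + 1 ∨ mT = 2 * k + 1 := by
    rcases max_choice mS mT with h | h
    · exact Or.inl (h.symm.trans hk)
    · exact Or.inr (h.symm.trans hk)
  have hM21 : MS = 2 * k + 1 ∨ MT = 2 * k + 1 := by
    have hk' : min MS MT = 2 * k + 1 := heq.1 ▸ hk
    rcases min_choice MS MT with h | h
    · exact Or.inl (h.symm.trans hk')
    · exact Or.inr (h.symm.trans hk')
  -- if both S and T attain the point, contradiction; so one set is squeezed
  rcases hS21 with hA | hA <;> rcases hM21 with hB | hB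
  · -- S squeezed at 2k+1
    left
    have hmT' : mT ≤ 2 * k := by
      rcases Nat.lt_or_ge mT (2 * k + 1) with h | h
      · omega
      · exact (hcontra (hgetS (Or.inl hA)) (hgetT (Or.inl (le_antisymm hbT h)))).elim
    have hMT' : 2 * k + 2 ≤ MT := by
      rcases Nat.lt_or_ge (2 * k + 1) MT with h | h
      · omega
      · exact (hcontra (hgetS (Or.inl hA)) (hgetT (Or.inr (le_antisymm h hBT)))).elim
    obtain ⟨y1, hy1T, hqy1⟩ := cutT k (by omega) (by omega)
    obtain ⟨y2, hy2T, hqy2⟩ := cutT (k + 1) (by omega) (by omega)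
    obtain ⟨s0, hs0S, hqs0⟩ := hgetS (Or.inl hA)
    refine ⟨k, ?_, ⟨y1, hy1T, hqy1⟩, ⟨y2, hy2T, by omega⟩⟩
    intro s hs
    rcases Nat.lt_or_ge (q s) (2 * k + 1) with h | h
    · obtain ⟨a, haS, hqa⟩ := cut hcS hfS hs hs0S (j := k) (by omega) (by omega)
      exact (hd a haS (q_inj (hqa.trans hqy1.symm) ▸ hy1T)).elim
    rcases Nat.lt_or_ge (2 * k + 1) (q s) with h' | h'
    · obtain ⟨a, haS, hqa⟩ := cut hcS hfS hs hs0S (j := k + 1) (by omega) (by omega)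
      exact (hd a haS (q_inj (by omega : q a = q y2) ▸ hy2T)).elim
    · omega
  · exact (hcontra (hgetS (Or.inl hA)) (hgetT (Or.inr hB))).elim
  · exact (hcontra (hgetS (Or.inr hB)) (hgetT (Or.inl hA))).elim
  · -- T squeezed at 2k+1
    right
    have hmS' : mS ≤ 2 * k := by
      rcases Nat.lt_or_ge mS (2 * k + 1) with h | h
      · omega
      · exact (hcontra (hgetS (Or.inl (le_antisymm hbS h))) (hgetT (Or.inl hA))).elim
    have hMS' : 2 * k + 2 ≤ MS := by
      rcases Nat.lt_or_ge (2 * k + 1) MS with h | h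
      · omega
      · exact (hcontra (hgetS (Or.inr (le_antisymm h hBS))) (hgetT (Or.inl hA))).elim
    obtain ⟨y1, hy1S, hqy1⟩ := cutS k (by omega) (by omega)
    obtain ⟨y2, hy2S, hqy2⟩ := cutS (k + 1) (by omega) (by omega)
    obtain ⟨t0, ht0T, hqt0⟩ := hgetT (Or.inl hA)
    refine ⟨k, ?_, ⟨y1, hy1S, hqy1⟩, ⟨y2, hy2S, by omega⟩⟩
    intro t ht
    rcases Nat.lt_or_ge (q t) (2 * k + 1) with h | h
    · obtain ⟨a, haT, hqa⟩ := cut hcT hfT ht ht0T (j := k) (by omega) (by omega)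
      exact (hd y1 hy1S (q_inj (hqy1.trans hqa.symm) ▸ haT)).elim
    rcases Nat.lt_or_ge (2 * k + 1) (q t) with h' | h'
    · obtain ⟨a, haT, hqa⟩ := cut hcT hfT ht ht0T (j := k + 1) (by omega) (by omega)
      exact (hd y2 hy2S (q_inj (by omega : q y2 = q a) ▸ haT)).elim
    · omega

lemma nested_elim {S T U : Set V98} (hfS : Free S)
    (hsq : ∃ k, (∀ z ∈ S, q z = 2 * k + 1) ∧
      (∃ y1 ∈ T, q y1 = 2 * k) ∧ (∃ y2 ∈ T, q y2 = 2 * k + 2))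
    (hadj : AdjSets S U) (hdU : ∀ v ∈ U, v ∉ T) : False := by
  obtain ⟨k, hSv, ⟨y1, hy1, hq1⟩, ⟨y2, hy2, hq2⟩⟩ := hsq
  exact H3 hfS hSv hq1 hq2 hadj (fun h => hdU y1 h hy1) (fun h => hdU y2 h hy2)

lemma ord2 {S T US UT : Set V98}
    (hcS : (G98.induce S).Connected) (hcT : (G98.induce T).Connected)
    (hfS : Free S) (hfT : Free T) (hd : ∀ v ∈ S, v ∉ T)
    (haS : AdjSets S US) (hdUS : ∀ v ∈ US, v ∉ T)
    (haT : AdjSets T UT) (hdUT : ∀ v ∈ UT, v ∉ S) :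
    Before S T ∨ Before T S := by
  rcases ORD hcS hcT hfS hfT (fun v a b => hd v a b) with h | h | hsq | hsq
  · exact Or.inl h
  · exact Or.inr h
  · exact (nested_elim hfS hsq haS hdUS).elim
  · exact (nested_elim hfT hsq haT hdUT).elim

lemma nocyc {S T U : Set V98} (h1 : Before S T) (h2 : Before T U) (h3 : Before U S)
    (hS : S.Nonempty) (hT : T.Nonempty) (hU : U.Nonempty) : False := by
  obtain ⟨s, hs⟩ := hS; obtain ⟨t, ht⟩ := hT; obtain ⟨u, hu⟩ := hU
  have := h1 s hs t ht
  have := h2 t ht u hu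
  have := h3 u hu s hs
  omega

lemma H1 {S T Z1 Z2 : Set V98} (hfS : Free S) (hfT : Free T)
    (hne1 : Z1.Nonempty) (hne2 : Z2.Nonempty) (hST : AdjSets S T)
    (h1 : Before S Z1) (h2 : Before Z1 Z2) (h3 : Before Z2 T) : False := by
  obtain ⟨u, huS, x, hxT, hux⟩ := hST
  obtain ⟨z1, hz1⟩ := hne1; obtain ⟨z2, hz2⟩ := hne2
  have := h1 u huS z1 hz1
  have := h2 z1 hz1 z2 hz2
  have := h3 z2 hz2 x hxT
  rcases adj_q (ne_r_of_free hfS huS) (ne_r_of_free hfT hxT) hux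
    with (h' | h') | (h' | h') <;> omega

lemma K4core (S1 S2 S3 U : Set V98)
    (hc1 : (G98.induce S1).Connected) (hc2 : (G98.induce S2).Connected)
    (hc3 : (G98.induce S3).Connected)
    (hf1 : Free S1) (hf2 : Free S2) (hf3 : Free S3)
    (d12 : ∀ v ∈ S1, v ∉ S2) (d13 : ∀ v ∈ S1, v ∉ S3) (d23 : ∀ v ∈ S2, v ∉ S3)
    (dU1 : ∀ v ∈ U, v ∉ S1) (dU2 : ∀ v ∈ U, v ∉ S2) (dU3 : ∀ v ∈ U, v ∉ S3)
    (a12 : AdjSets S1 S2) (a13 : AdjSets S1 S3) (a23 : AdjSets S2 S3)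
    (aU1 : AdjSets S1 U) (aU2 : AdjSets S2 U) (aU3 : AdjSets S3 U) : False := by
  have hn1 := conn_nonempty hc1
  have hn2 := conn_nonempty hc2
  have hn3 := conn_nonempty hc3
  have d21 : ∀ v ∈ S2, v ∉ S1 := fun v hv hv' => d12 v hv' hv
  have d31 : ∀ v ∈ S3, v ∉ S1 := fun v hv hv' => d13 v hv' hv
  have d32 : ∀ v ∈ S3, v ∉ S2 := fun v hv hv' => d23 v hv' hv
  have o12 := ord2 hc1 hc2 hf1 hf2 d12 aU1 dU2 aU2 dU1
  have o13 := ord2 hc1 hc3 hf1 hf3 d13 aU1 dU3 aU3 dU1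
  have o23 := ord2 hc2 hc3 hf2 hf3 d23 aU2 dU3 aU3 dU2
  rcases o12 with b12 | b21 <;> rcases o13 with b13 | b31 <;> rcases o23 with b23 | b32
  · exact H2 hf1 hf3 hf2 hn2 a13 b12 b23 aU2 dU1 dU3
  · exact H2 hf1 hf2 hf3 hn3 a12 b13 b32 aU3 dU1 dU2
  · exact nocyc b12 b23 b31 hn1 hn2 hn3
  · exact H2 hf3 hf2 hf1 hn1 a23.symm b31 b12 aU1 dU3 dU2
  · exact H2 hf2 hf3 hf1 hn1 a23 b21 b13 aU1 dU2 dU3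
  · exact nocyc b13 b32 b21 hn1 hn3 hn2
  · exact H2 hf2 hf1 hf3 hn3 a12.symm b23 b31 aU3 dU2 dU1
  · exact H2 hf3 hf1 hf2 hn2 a13.symm b32 b21 aU2 dU3 dU1

lemma COREA' (A X B1 B2 B3 : Set V98)
    (hfA : Free A) (hfB1 : Free B1) (hfB2 : Free B2) (hfB3 : Free B3)
    (hne2 : B2.Nonempty) (h12 : Before B1 B2) (h23 : Before B2 B3)
    (aA1 : AdjSets A B1) (aA3 : AdjSets A B3) (x2 : AdjSets B2 X)
    (oA2 : Before A B2 ∨ Before B2 A)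
    (dXA : ∀ v ∈ X, v ∉ A) (dX1 : ∀ v ∈ X, v ∉ B1) (dX3 : ∀ v ∈ X, v ∉ B3) : False := by
  rcases oA2 with h | h
  · exact H2 hfA hfB3 hfB2 hne2 aA3 h h23 x2 dXA dX3
  · exact H2 hfB1 hfA hfB2 hne2 aA1.symm h12 h x2 dX1 dXA

lemma COREA (A B1 B2 B3 X : Set V98)
    (hcA : (G98.induce A).Connected) (hcB1 : (G98.induce B1).Connected)
    (hcB2 : (G98.induce B2).Connected) (hcB3 : (G98.induce B3).Connected)
    (hfA : Free A) (hfB1 : Free B1) (hfB2 : Free B2) (hfB3 : Free B3)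
    (dA1 : ∀ v ∈ A, v ∉ B1) (dA2 : ∀ v ∈ A, v ∉ B2) (dA3 : ∀ v ∈ A, v ∉ B3)
    (d12 : ∀ v ∈ B1, v ∉ B2) (d13 : ∀ v ∈ B1, v ∉ B3) (d23 : ∀ v ∈ B2, v ∉ B3)
    (dXA : ∀ v ∈ X, v ∉ A) (dX1 : ∀ v ∈ X, v ∉ B1) (dX2 : ∀ v ∈ X, v ∉ B2)
    (dX3 : ∀ v ∈ X, v ∉ B3)
    (a1 : AdjSets A B1) (a2 : AdjSets A B2) (a3 : AdjSets A B3)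
    (x1 : AdjSets B1 X) (x2 : AdjSets B2 X) (x3 : AdjSets B3 X) : False := by
  have hn1 := conn_nonempty hcB1
  have hn2 := conn_nonempty hcB2
  have hn3 := conn_nonempty hcB3
  have d21 : ∀ v ∈ B2, v ∉ B1 := fun v hv hv' => d12 v hv' hv
  have d31 : ∀ v ∈ B3, v ∉ B1 := fun v hv hv' => d13 v hv' hv
  have d32 : ∀ v ∈ B3, v ∉ B2 := fun v hv hv' => d23 v hv' hv
  have o12 := ord2 hcB1 hcB2 hfB1 hfB2 d12 a1.symm dA2 a2.symm dA1
  have o13 := ord2 hcB1 hcB3 hfB1 hfB3 d13 a1.symm dA3 a3.symm dA1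
  have o23 := ord2 hcB2 hcB3 hfB2 hfB3 d23 a2.symm dA3 a3.symm dA2
  have oA1 := ord2 hcA hcB1 hfA hfB1 dA1 a2 d21 x1 dXA
  have oA2 := ord2 hcA hcB2 hfA hfB2 dA2 a1 d12 x2 dXA
  have oA3 := ord2 hcA hcB3 hfA hfB3 dA3 a1 d13 x3 dXA
  rcases o12 with b12 | b21 <;> rcases o13 with b13 | b31 <;> rcases o23 with b23 | b32
  · exact COREA' A X B1 B2 B3 hfA hfB1 hfB2 hfB3 hn2 b12 b23 a1 a3 x2 oA2 dXA dX1 dX3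
  · exact COREA' A X B1 B3 B2 hfA hfB1 hfB3 hfB2 hn3 b13 b32 a1 a2 x3 oA3 dXA dX1 dX2
  · exact nocyc b12 b23 b31 hn1 hn2 hn3
  · exact COREA' A X B3 B1 B2 hfA hfB3 hfB1 hfB2 hn1 b31 b12 a3 a2 x1 oA1 dXA dX3 dX2
  · exact COREA' A X B2 B1 B3 hfA hfB2 hfB1 hfB3 hn1 b21 b13 a2 a3 x1 oA1 dXA dX2 dX3
  · exact nocyc b13 b32 b21 hn1 hn3 hn2
  · exact COREA' A X B2 B3 B1 hfA hfB2 hfB3 hfB1 hn3 b23 b31 a2 a1 x3 oA3 dXA dX2 dX1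
  · exact COREA' A X B3 B2 B1 hfA hfB3 hfB2 hfB1 hn2 b32 b21 a3 a1 x2 oA2 dXA dX3 dX1

lemma COREB'' (A1 A2 B1 B2 : Set V98)
    (hfA1 : Free A1) (hfA2 : Free A2) (hfB1 : Free B1) (hfB2 : Free B2)
    (hneA2 : A2.Nonempty) (hneB1 : B1.Nonempty) (hneB2 : B2.Nonempty)
    (hA : Before A1 A2) (hB : Before B1 B2) (hAB : Before A1 B1)
    (o21 : Before A2 B1 ∨ Before B1 A2) (o22 : Before A2 B2 ∨ Before B2 A2)
    (a12 : AdjSets A1 B2) (a21 : AdjSets A2 B1) (sB2A1 : AdjSets B2 A1)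
    (dA2B1 : ∀ v ∈ A2, v ∉ B1) (dB1A2 : ∀ v ∈ B1, v ∉ A2)
    (dA1B1 : ∀ v ∈ A1, v ∉ B1) (dA1A2 : ∀ v ∈ A1, v ∉ A2) : False := by
  rcases o21 with h | h
  · exact H1 hfA1 hfB2 hneA2 hneB1 a12 hA h hB
  · rcases o22 with h' | h'
    · exact H1 hfA1 hfB2 hneB1 hneA2 a12 hAB h h'
    · exact H2 hfB1 hfA2 hfB2 hneB2 a21.symm hB h' sB2A1 dA1B1 dA1A2

lemma COREB' (A1 A2 B1 B2 : Set V98)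
    (hfA1 : Free A1) (hfA2 : Free A2) (hfB1 : Free B1) (hfB2 : Free B2)
    (hneA1 : A1.Nonempty) (hneA2 : A2.Nonempty) (hneB1 : B1.Nonempty) (hneB2 : B2.Nonempty)
    (hA : Before A1 A2) (hB : Before B1 B2)
    (o11 : Before A1 B1 ∨ Before B1 A1) (o12 : Before A1 B2 ∨ Before B2 A1)
    (o21 : Before A2 B1 ∨ Before B1 A2) (o22 : Before A2 B2 ∨ Before B2 A2)
    (a11 : AdjSets A1 B1) (a12 : AdjSets A1 B2) (a21 : AdjSets A2 B1) (a22 : AdjSets A2 B2)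
    (dA1A2 : ∀ v ∈ A1, v ∉ A2) (dB1B2 : ∀ v ∈ B1, v ∉ B2)
    (dA1B1 : ∀ v ∈ A1, v ∉ B1) (dB1A1 : ∀ v ∈ B1, v ∉ A1)
    (dA2B1 : ∀ v ∈ A2, v ∉ B1) (dB1A2 : ∀ v ∈ B1, v ∉ A2)
    (dA1B2 : ∀ v ∈ A1, v ∉ B2) (dB2A1 : ∀ v ∈ B2, v ∉ A1) : False := by
  rcases o11 with h | h
  · exact COREB'' A1 A2 B1 B2 hfA1 hfA2 hfB1 hfB2 hneA2 hneB1 hneB2 hA hB h o21 o22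
      a12 a21 a12.symm dA2B1 dB1A2 dA1B1 dA1A2
  · exact COREB'' B1 B2 A1 A2 hfB1 hfB2 hfA1 hfA2 hneB2 hneA1 hneA2 hB hA h
      o12.symm o22.symm a21.symm a12.symm a21 dB2A1 dA1B2 dB1A1 dB1B2

lemma COREB (A1 A2 B1 B2 : Set V98)
    (hcA1 : (G98.induce A1).Connected) (hcA2 : (G98.induce A2).Connected)
    (hcB1 : (G98.induce B1).Connected) (hcB2 : (G98.induce B2).Connected)
    (hfA1 : Free A1) (hfA2 : Free A2) (hfB1 : Free B1) (hfB2 : Free B2)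
    (dA1A2 : ∀ v ∈ A1, v ∉ A2) (dB1B2 : ∀ v ∈ B1, v ∉ B2)
    (dA1B1 : ∀ v ∈ A1, v ∉ B1) (dA1B2 : ∀ v ∈ A1, v ∉ B2)
    (dA2B1 : ∀ v ∈ A2, v ∉ B1) (dA2B2 : ∀ v ∈ A2, v ∉ B2)
    (a11 : AdjSets A1 B1) (a12 : AdjSets A1 B2)
    (a21 : AdjSets A2 B1) (a22 : AdjSets A2 B2) : False := by
  have hnA1 := conn_nonempty hcA1
  have hnA2 := conn_nonempty hcA2
  have hnB1 := conn_nonempty hcB1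
  have hnB2 := conn_nonempty hcB2
  have dA2A1 : ∀ v ∈ A2, v ∉ A1 := fun v hv hv' => dA1A2 v hv' hv
  have dB2B1 : ∀ v ∈ B2, v ∉ B1 := fun v hv hv' => dB1B2 v hv' hv
  have dB1A1 : ∀ v ∈ B1, v ∉ A1 := fun v hv hv' => dA1B1 v hv' hv
  have dB2A1 : ∀ v ∈ B2, v ∉ A1 := fun v hv hv' => dA1B2 v hv' hv
  have dB1A2 : ∀ v ∈ B1, v ∉ A2 := fun v hv hv' => dA2B1 v hv' hv
  have dB2A2 : ∀ v ∈ B2, v ∉ A2 := fun v hv hv' => dA2B2 v hv' hv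
  have oA := ord2 hcA1 hcA2 hfA1 hfA2 dA1A2 a11 dB1A2 a21 dB1A1
  have oB := ord2 hcB1 hcB2 hfB1 hfB2 dB1B2 a11.symm dA1B2 a12.symm dA1B1
  have oA1B1 := ord2 hcA1 hcB1 hfA1 hfB1 dA1B1 a12 dB2B1 a21.symm dA2A1
  have oA1B2 := ord2 hcA1 hcB2 hfA1 hfB2 dA1B2 a11 dB1B2 a22.symm dA2A1
  have oA2B1 := ord2 hcA2 hcB1 hfA2 hfB1 dA2B1 a22 dB2B1 a11.symm dA1A2
  have oA2B2 := ord2 hcA2 hcB2 hfA2 hfB2 dA2B2 a21 dB1B2 a12.symm dA1A2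
  rcases oA with hA | hA <;> rcases oB with hB | hB
  · exact COREB' A1 A2 B1 B2 hfA1 hfA2 hfB1 hfB2 hnA1 hnA2 hnB1 hnB2 hA hB
      oA1B1 oA1B2 oA2B1 oA2B2 a11 a12 a21 a22
      dA1A2 dB1B2 dA1B1 dB1A1 dA2B1 dB1A2 dA1B2 dB2A1
  · exact COREB' A1 A2 B2 B1 hfA1 hfA2 hfB2 hfB1 hnA1 hnA2 hnB2 hnB1 hA hB
      oA1B2 oA1B1 oA2B2 oA2B1 a12 a11 a22 a21
      dA1A2 dB2B1 dA1B2 dB2A1 dA2B2 dB2A2 dA1B1 dB1A1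
  · exact COREB' A2 A1 B1 B2 hfA2 hfA1 hfB1 hfB2 hnA2 hnA1 hnB1 hnB2 hA hB
      oA2B1 oA2B2 oA1B1 oA1B2 a21 a22 a11 a12
      dA2A1 dB1B2 dA2B1 dB1A2 dA1B1 dB1A1 dA2B2 dB2A2
  · exact COREB' A2 A1 B2 B1 hfA2 hfA1 hfB2 hfB1 hnA2 hnA1 hnB2 hnB1 hA hB
      oA2B2 oA2B1 oA1B2 oA1B1 a22 a21 a12 a11
      dA2A1 dB2B1 dA2B2 dB2A2 dA1B2 dB2A1 dA2B1 dB1A2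

lemma no_K4 : ¬ HasMinor G98 (SimpleGraph.completeGraph (Fin 4)) := by
  rintro ⟨f, hconn, hdisj, hadj⟩
  have D : ∀ a b : Fin 4, a ≠ b → ∀ v ∈ f a, v ∉ f b :=
    fun a b h v hv hv' => Set.disjoint_left.mp (hdisj h) hv hv'
  have A : ∀ a b : Fin 4, a ≠ b → AdjSets (f a) (f b) := by
    intro a b h
    exact hadj a b h
  have key : ∀ i1 i2 i3 iU : Fin 4, i1 ≠ i2 → i1 ≠ i3 → i2 ≠ i3 →
      iU ≠ i1 → iU ≠ i2 → iU ≠ i3 →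
      Free (f i1) → Free (f i2) → Free (f i3) → False := by
    intro i1 i2 i3 iU h12 h13 h23 hU1 hU2 hU3 hf1 hf2 hf3
    exact K4core (f i1) (f i2) (f i3) (f iU) (hconn i1) (hconn i2) (hconn i3)
      hf1 hf2 hf3 (D i1 i2 h12) (D i1 i3 h13) (D i2 i3 h23)
      (D iU i1 hU1) (D iU i2 hU2) (D iU i3 hU3)
      (A i1 i2 h12) (A i1 i3 h13) (A i2 i3 h23)
      (A i1 iU (Ne.symm hU1)) (A i2 iU (Ne.symm hU2)) (A i3 iU (Ne.symm hU3))
  by_cases h0 : Sum.inl () ∈ f 0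
  · exact key 1 2 3 0 (by decide) (by decide) (by decide) (by decide) (by decide) (by decide)
      (fun h => D 0 1 (by decide) _ h0 h) (fun h => D 0 2 (by decide) _ h0 h)
      (fun h => D 0 3 (by decide) _ h0 h)
  by_cases h1 : Sum.inl () ∈ f 1
  · exact key 0 2 3 1 (by decide) (by decide) (by decide) (by decide) (by decide) (by decide)
      (fun h => D 1 0 (by decide) _ h1 h) (fun h => D 1 2 (by decide) _ h1 h)
      (fun h => D 1 3 (by decide) _ h1 h)
  by_cases h2 : Sum.inl () ∈ f 2
  · exact key 0 1 3 2 (by decide) (by decide) (by decide) (by decide) (by decide) (by decide)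
      (fun h => D 2 0 (by decide) _ h2 h) (fun h => D 2 1 (by decide) _ h2 h)
      (fun h => D 2 3 (by decide) _ h2 h)
  · exact key 0 1 2 3 (by decide) (by decide) (by decide) (by decide) (by decide) (by decide)
      h0 h1 h2

lemma no_K23 : ¬ HasMinor G98 (completeBipartiteGraph (Fin 2) (Fin 3)) := by
  rintro ⟨f, hconn, hdisj, hadj⟩
  have D : ∀ a b : Fin 2 ⊕ Fin 3, a ≠ b → ∀ v ∈ f a, v ∉ f b :=
    fun a b h v hv hv' => Set.disjoint_left.mp (hdisj h) hv hv'
  have A : ∀ (i : Fin 2) (j : Fin 3), AdjSets (f (Sum.inl i)) (f (Sum.inr j)) := by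
    intro i j
    exact hadj _ _ (by simp)
  -- abbreviations
  have hcoreA : ∀ (iA iX : Fin 2), iA ≠ iX →
      Free (f (Sum.inl iA)) → Free (f (Sum.inr 0)) → Free (f (Sum.inr 1)) →
      Free (f (Sum.inr 2)) → False := by
    intro iA iX hne hfA hf0 hf1 hf2
    exact COREA (f (Sum.inl iA)) (f (Sum.inr 0)) (f (Sum.inr 1)) (f (Sum.inr 2))
      (f (Sum.inl iX))
      (hconn _) (hconn _) (hconn _) (hconn _) hfA hf0 hf1 hf2
      (D _ _ (by simp) ) (D _ _ (by simp)) (D _ _ (by simp))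
      (D _ _ (by simp)) (D _ _ (by simp)) (D _ _ (by simp))
      (D _ _ (by simp [hne.symm])) (D _ _ (by simp)) (D _ _ (by simp)) (D _ _ (by simp))
      (A iA 0) (A iA 1) (A iA 2) (A iX 0).symm (A iX 1).symm (A iX 2).symm
  have hcoreB : ∀ (j1 j2 : Fin 3), j1 ≠ j2 →
      Free (f (Sum.inl 0)) → Free (f (Sum.inl 1)) →
      Free (f (Sum.inr j1)) → Free (f (Sum.inr j2)) → False := by
    intro j1 j2 hne hfA1 hfA2 hf1 hf2
    exact COREB (f (Sum.inl 0)) (f (Sum.inl 1)) (f (Sum.inr j1)) (f (Sum.inr j2))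
      (hconn _) (hconn _) (hconn _) (hconn _) hfA1 hfA2 hf1 hf2
      (D _ _ (by simp)) (D _ _ (by simp [hne])) (D _ _ (by simp)) (D _ _ (by simp))
      (D _ _ (by simp)) (D _ _ (by simp))
      (A 0 j1) (A 0 j2) (A 1 j1) (A 1 j2)
  by_cases hA0 : Sum.inl () ∈ f (Sum.inl 0)
  · exact hcoreA 1 0 (by decide) (fun h => D _ _ (by decide) _ hA0 h)
      (fun h => D _ _ (by decide) _ hA0 h) (fun h => D _ _ (by decide) _ hA0 h)
      (fun h => D _ _ (by decide) _ hA0 h)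
  by_cases hA1 : Sum.inl () ∈ f (Sum.inl 1)
  · exact hcoreA 0 1 (by decide) (fun h => D _ _ (by decide) _ hA1 h)
      (fun h => D _ _ (by decide) _ hA1 h) (fun h => D _ _ (by decide) _ hA1 h)
      (fun h => D _ _ (by decide) _ hA1 h)
  by_cases hB0 : Sum.inl () ∈ f (Sum.inr 0)
  · exact hcoreB 1 2 (by decide) hA0 hA1 (fun h => D _ _ (by decide) _ hB0 h)
      (fun h => D _ _ (by decide) _ hB0 h)
  by_cases hB1 : Sum.inl () ∈ f (Sum.inr 1)
  · exact hcoreB 0 2 (by decide) hA0 hA1 (fun h => D _ _ (by decide) _ hB1 h)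
      (fun h => D _ _ (by decide) _ hB1 h)
  by_cases hB2 : Sum.inl () ∈ f (Sum.inr 2)
  · exact hcoreB 0 1 (by decide) hA0 hA1 (fun h => D _ _ (by decide) _ hB2 h)
      (fun h => D _ _ (by decide) _ hB2 h)
  · exact hcoreA 0 1 (by decide) hA0 hB0 hB1 hB2

lemma not_col : ¬ G98.Colorable 2 := by
  rintro ⟨c⟩
  have h01 : G98.Adj (Sum.inl ()) (Sum.inr (Sum.inl 0)) := Or.inl trivial
  have h02 : G98.Adj (Sum.inl ()) (Sum.inr (Sum.inl 1)) := Or.inl trivial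
  have h12 : G98.Adj (Sum.inr (Sum.inl 0)) (Sum.inr (Sum.inl 1)) := Or.inl (show ((1 : Fin 49) : ℕ) = (0 : Fin 49) + 1 by decide)
  have key : ∀ x y z : Fin 2, x ≠ y → x ≠ z → y ≠ z → False := by decide
  exact key _ _ _ (c.valid h01) (c.valid h02) (c.valid h12)

/-- The graph `G` (root `r` joined to a path `w₀, …, w₄₈`, with
pendant-triangle vertices `v₁, …, v₄₈` where `vᵢ ~ w_{i-1}, wᵢ`) is outerplanar and is
not bipartite. -/
theorem G98_outerplanar_not_bipartite :
    IsOuterplanar G98 ∧ ¬ G98.Colorable 2 :=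
  ⟨⟨no_K4, no_K23⟩, not_col⟩
end

section
/- Let k ≥ 3 and let G be the closure of a path p_1,...,p_{k-1} with 2k-4 leaves l_1,...,l_{2k-4} attached to p_{k-1}. If c is a partial proper coloring of G in which p_1,...,p_{k-2} are colored with k-2 distinct colors and some k-2 of the leaves are colored with k-2 further distinct colors (disjoint from the first set), then the vertex p_{k-1} cannot be properly colored using a palette of fewer than 2k-3 colors. -/
/-- Let `k ≥ 3` and let `G` be the closure of a path `p₁, …, p_{k-1}`
with `2k - 4` leaves attached to `p_{k-1}`.  Suppose `c` is a partial proper coloring of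
`G` with colors from a palette of `t ≤ 2k - 4` colors in which `p₁, …, p_{k-2}` are
colored with `k - 2` distinct colors and some `k - 2` of the leaves are colored with
`k - 2` further distinct colors disjoint from the first set.  Then `p_{k-1}` cannot be
properly colored: every color of the palette already appears on a neighbour of `p_{k-1}`. -/
theorem pathLeafGraph_no_legal_color (k : ℕ) (hk : 3 ≤ k) (t : ℕ) (ht : t ≤ 2 * k - 4)
    (c : (Fin (k - 1) ⊕ Fin (2 * k - 4)) → Option (Fin t))
    (hproper : ∀ u v, (pathLeafGraph k).Adj u v → ∀ a : Fin t,
      c u = some a → c v ≠ some a)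
    (hpath : ∀ i : Fin (k - 1), (i : ℕ) < k - 2 → ∃ a, c (Sum.inl i) = some a)
    (hpathinj : ∀ i j : Fin (k - 1), (i : ℕ) < k - 2 → (j : ℕ) < k - 2 →
      c (Sum.inl i) = c (Sum.inl j) → i = j)
    (hleaves : ∃ L : Finset (Fin (2 * k - 4)), L.card = k - 2 ∧
      (∀ j ∈ L, ∃ a, c (Sum.inr j) = some a) ∧
      (∀ j j' : Fin (2 * k - 4), j ∈ L → j' ∈ L → c (Sum.inr j) = c (Sum.inr j') → j = j') ∧
      ∀ j ∈ L, ∀ i : Fin (k - 1), (i : ℕ) < k - 2 → c (Sum.inr j) ≠ c (Sum.inl i)) :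
    ∀ a : Fin t, ∃ u, (pathLeafGraph k).Adj (Sum.inl ⟨k - 2, by omega⟩) u ∧
      c u = some a := by

  obtain ⟨L, hLcard, hLcol, hLinj, hLdisj⟩ := hleaves
  have hk2 : k - 2 < k - 1 := by omega
  set P : Finset (Fin (k-1)) := Finset.Iio ⟨k-2, hk2⟩ with hP
  have hmemP : ∀ i : Fin (k-1), i ∈ P ↔ (i:ℕ) < k - 2 := fun i => by
    simp [hP, Fin.lt_def]
  have hPcard : P.card = k - 2 := by simp [hP]
  set A : Finset (Option (Fin t)) := P.image (fun i => c (Sum.inl i)) with hA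
  set B : Finset (Option (Fin t)) := L.image (fun j => c (Sum.inr j)) with hB
  have hAcard : A.card = k - 2 := by
    rw [hA, Finset.card_image_of_injOn, hPcard]
    intro i hi j hj h
    exact hpathinj i j ((hmemP i).1 hi) ((hmemP j).1 hj) h
  have hBcard : B.card = k - 2 := by
    rw [hB, Finset.card_image_of_injOn, hLcard]
    intro i hi j hj h; exact hLinj i j hi hj h
  have hdisj : Disjoint A B := by
    rw [Finset.disjoint_left]
    intro x hxA hxB
    obtain ⟨i, hi, rfl⟩ := Finset.mem_image.1 hxA
    obtain ⟨j, hj, hji⟩ := Finset.mem_image.1 hxB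
    exact hLdisj j hj i ((hmemP i).1 hi) hji
  have hsub : A ∪ B ⊆ (Finset.univ : Finset (Fin t)).image some := by
    intro x hx
    rcases Finset.mem_union.1 hx with hx | hx
    · obtain ⟨i, hi, rfl⟩ := Finset.mem_image.1 hx
      obtain ⟨a, ha⟩ := hpath i ((hmemP i).1 hi)
      simp [ha]
    · obtain ⟨j, hj, rfl⟩ := Finset.mem_image.1 hx
      obtain ⟨a, ha⟩ := hLcol j hj
      simp [ha]
  have hcardUB : (A ∪ B).card = 2 * k - 4 := by
    rw [Finset.card_union_of_disjoint hdisj, hAcard, hBcard]; omega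
  have himgcard : ((Finset.univ : Finset (Fin t)).image some).card = t := by
    rw [Finset.card_image_of_injective _ (Option.some_injective _), Finset.card_univ,
      Fintype.card_fin]
  have heq : A ∪ B = (Finset.univ : Finset (Fin t)).image some := by
    apply Finset.eq_of_subset_of_card_le hsub
    rw [himgcard, hcardUB]; omega
  intro a
  have hmem : some a ∈ A ∪ B := by rw [heq]; simp
  rcases Finset.mem_union.1 hmem with hx | hx
  · obtain ⟨i, hi, hci⟩ := Finset.mem_image.1 hx
    refine ⟨Sum.inl i, ⟨?_, Or.inl rfl⟩, hci⟩
    intro h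
    have h1 := (hmemP i).1 hi
    have h2 : (⟨k-2, hk2⟩ : Fin (k-1)) = i := Sum.inl.inj h
    rw [← h2] at h1
    simp at h1
  · obtain ⟨j, hj, hcj⟩ := Finset.mem_image.1 hx
    exact ⟨Sum.inr j, ⟨by simp, Or.inl rfl⟩, hcj⟩
end
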